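/- arXiv:1609.00232 — 5 statements merged into one kernel-verified Lean document; each statement's English description precedes it below -/
import Mathlib

section
/- Let f be four times continuously differentiable on an interval containing x_{i−1} < x_i < x_{i+1} with Δx_i = x_i−x_{i−1}, Δx_{i+1} = x_{i+1}−x_i. Then the error of the central second-derivative approximation satisfies |δ_{i,−1}f(x_{i−1}) + δ_{i,0}f(x_i) + δ_{i,1}f(x_{i+1}) − f''(x_i)| ≤ (1/3)|Δx_{i+1} − Δx_i|·sup|f'''| + (1/12)(Δx_i² + Δx_{i+1}²)·sup|f⁗|; in particular, on a smooth mesh with |Δx_{i+1} − Δx_i| ≤ C₂(Δξ)² and Δx_i, Δx_{i+1} ≤ C₁Δξ, the truncation error is O((Δξ)²). -/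
open Set

private lemma iterDerivWithin_eq (f : ℝ → ℝ) (hf : ContDiff ℝ 4 f) {a b : ℝ} (hab : a < b)
    {n : ℕ} (hn : n ≤ 4) : ∀ x ∈ Icc a b,
    iteratedDerivWithin n f (Icc a b) x = iteratedDeriv n f x := by
  induction n with
  | zero => intro x hx; simp
  | succ n ih =>
    intro x hx
    have hn' : n ≤ 4 := le_trans (Nat.le_succ n) hn
    rw [iteratedDerivWithin_succ]
    have hcongr : derivWithin (iteratedDerivWithin n f (Icc a b)) (Icc a b) x
        = derivWithin (iteratedDeriv n f) (Icc a b) x :=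
      derivWithin_congr (fun y hy => ih hn' y hy) (ih hn' x hx)
    rw [hcongr, iteratedDeriv_succ]
    have hlt : (n : WithTop ℕ∞) < 4 := by exact_mod_cast (show n < 4 by omega)
    have hdiff : DifferentiableAt ℝ (iteratedDeriv n f) x :=
      (hf.differentiable_iteratedDeriv n hlt).differentiableAt
    exact DifferentiableAt.derivWithin hdiff ((uniqueDiffOn_Icc hab) x hx)

private lemma taylor4 (f : ℝ → ℝ) (hf : ContDiff ℝ 4 f) {a b M : ℝ} (hab : a < b)
    (hM : ∀ x ∈ Icc a b, |iteratedDeriv 4 f x| ≤ M) :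
    |f b - (f a + iteratedDeriv 1 f a * (b - a) + iteratedDeriv 2 f a * (b - a) ^ 2 / 2
      + iteratedDeriv 3 f a * (b - a) ^ 3 / 6)| ≤ M * (b - a) ^ 4 / 24 := by
  have hfOn : ContDiffOn ℝ 3 f (Icc a b) := (hf.of_le (by norm_num)).contDiffOn
  have hW := iterDerivWithin_eq f hf hab (n := 3) (by norm_num)
  have hf' : DifferentiableOn ℝ (iteratedDerivWithin 3 f (Icc a b)) (Ioo a b) := by
    refine ((hf.differentiable_iteratedDeriv 3 (by norm_cast)).differentiableOn).congr ?_
    intro x hx; exact hW x (Ioo_subset_Icc_self hx)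
  obtain ⟨x', hx', heq⟩ := taylor_mean_remainder_lagrange (n := 3) hab.ne
    (by rw [uIcc_of_le hab.le]; exact hfOn) (by rw [uIcc_of_le hab.le, uIoo_of_le hab.le]; exact hf')
  rw [uIcc_of_le hab.le] at heq
  rw [uIoo_of_le hab.le] at hx'
  have hTay : taylorWithinEval f 3 (Icc a b) a b
      = f a + iteratedDeriv 1 f a * (b - a) + iteratedDeriv 2 f a * (b - a) ^ 2 / 2
        + iteratedDeriv 3 f a * (b - a) ^ 3 / 6 := by
    rw [taylor_within_apply]
    have h0 := iterDerivWithin_eq f hf hab (n := 0) (by norm_num) a (left_mem_Icc.2 hab.le)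
    have h1 := iterDerivWithin_eq f hf hab (n := 1) (by norm_num) a (left_mem_Icc.2 hab.le)
    have h2 := iterDerivWithin_eq f hf hab (n := 2) (by norm_num) a (left_mem_Icc.2 hab.le)
    have h3 := iterDerivWithin_eq f hf hab (n := 3) (by norm_num) a (left_mem_Icc.2 hab.le)
    simp [Finset.sum_range_succ, h0, h1, h2, h3, Nat.factorial]
    ring
  rw [hTay] at heq
  have h4' := iterDerivWithin_eq f hf hab (n := 4) (by norm_num) x' (Ioo_subset_Icc_self hx')
  norm_num [Nat.factorial] at heq
  rw [iteratedDeriv_one, heq, h4']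
  have hb : |iteratedDeriv 4 f x'| ≤ M := hM x' (Ioo_subset_Icc_self hx')
  rw [abs_div, abs_mul, abs_pow, abs_of_pos (by linarith : (0:ℝ) < b - a)]
  have h24 : |(24:ℝ)| = 24 := by norm_num
  rw [h24]
  gcongr

private lemma taylor4' (f : ℝ → ℝ) (hf : ContDiff ℝ 4 f) {a b M : ℝ} (hab : a < b)
    (hM : ∀ x ∈ Icc a b, |iteratedDeriv 4 f x| ≤ M) :
    |f a - (f b + iteratedDeriv 1 f b * (a - b) + iteratedDeriv 2 f b * (a - b) ^ 2 / 2
      + iteratedDeriv 3 f b * (a - b) ^ 3 / 6)| ≤ M * (b - a) ^ 4 / 24 := by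
  set g : ℝ → ℝ := fun t => f (a + b - t) with hgdef
  have hgiter : ∀ (n : ℕ) (t : ℝ),
      iteratedDeriv n g t = (-1 : ℝ) ^ n • iteratedDeriv n f (a + b - t) := by
    intro n t
    have h1 : iteratedDeriv n (fun x => (fun z => f (a + b + z)) (-x)) t
        = (-1 : ℝ) ^ n • iteratedDeriv n (fun z => f (a + b + z)) (-t) :=
      iteratedDeriv_comp_neg n (fun z => f (a + b + z)) t
    have h2 : iteratedDeriv n (fun z => f (a + b + z)) (-t) = iteratedDeriv n f (a + b + -t) := by
      rw [iteratedDeriv_comp_const_add]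
    have h3 : g = fun x => (fun z => f (a + b + z)) (-x) := by
      funext x; simp [hgdef, sub_eq_add_neg]
    rw [h3, h1, h2, ← sub_eq_add_neg]
  have hg : ContDiff ℝ 4 g := hf.comp (by fun_prop)
  have hMg : ∀ x ∈ Icc a b, |iteratedDeriv 4 g x| ≤ M := by
    intro x hx
    have hmem : a + b - x ∈ Icc a b := ⟨by linarith [hx.2], by linarith [hx.1]⟩
    rw [hgiter 4 x]
    simp only [smul_eq_mul]
    rw [abs_mul]
    norm_num
    exact hM _ hmem
  have := taylor4 g hg hab hMg
  simp only [hgiter] at this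
  have e2 : a + b - a = b := by ring
  rw [e2] at this
  have hgb : g b = f a := by show f (a + b - b) = f a; norm_num
  have hga : g a = f b := by show f (a + b - a) = f b; norm_num
  rw [hgb, hga] at this
  simp only [smul_eq_mul] at this
  calc |f a - (f b + iteratedDeriv 1 f b * (a - b) + iteratedDeriv 2 f b * (a - b) ^ 2 / 2
      + iteratedDeriv 3 f b * (a - b) ^ 3 / 6)|
      = |f a - (f b + (-1) ^ 1 * iteratedDeriv 1 f b * (b - a)
        + (-1) ^ 2 * iteratedDeriv 2 f b * (b - a) ^ 2 / 2
        + (-1) ^ 3 * iteratedDeriv 3 f b * (b - a) ^ 3 / 6)| := by congr 1; ring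
    _ ≤ M * (b - a) ^ 4 / 24 := this

/-- truncation error bound for the non-uniform central
second-derivative formula. -/
theorem stmt7 (xm xi xp : ℝ) (h1 : xm < xi) (h2 : xi < xp)
    (f : ℝ → ℝ) (hf : ContDiff ℝ 4 f) (M3 M4 : ℝ)
    (h3 : ∀ x ∈ Set.Icc xm xp, |iteratedDeriv 3 f x| ≤ M3)
    (h4 : ∀ x ∈ Set.Icc xm xp, |iteratedDeriv 4 f x| ≤ M4) :
    let Δi := xi - xm
    let Δip := xp - xi
    |(2 / (Δi * (Δi + Δip))) * f xm + (-2 / (Δi * Δip)) * f xi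
        + (2 / (Δip * (Δi + Δip))) * f xp - deriv (deriv f) xi|
      ≤ (1 / 3) * |Δip - Δi| * M3 + (1 / 12) * (Δi ^ 2 + Δip ^ 2) * M4 := by
  intro Δi Δip
  have hA : Δi = xi - xm := rfl
  have hB : Δip = xp - xi := rfl
  rw [hA, hB]
  set A := xi - xm with hAdef
  set B := xp - xi with hBdef
  have hApos : 0 < A := by rw [hAdef]; linarith
  have hBpos : 0 < B := by rw [hBdef]; linarith
  have hSpos : 0 < A + B := by linarith
  have hM4 : 0 ≤ M4 := le_trans (abs_nonneg _) (h4 xi ⟨h1.le, h2.le⟩)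
  have hM3 : 0 ≤ M3 := le_trans (abs_nonneg _) (h3 xi ⟨h1.le, h2.le⟩)
  set F1 := iteratedDeriv 1 f xi with hF1
  set F2 := iteratedDeriv 2 f xi with hF2
  set F3 := iteratedDeriv 3 f xi with hF3
  have hdd : deriv (deriv f) xi = F2 := by
    rw [hF2, iteratedDeriv_succ, iteratedDeriv_one]
  set Rm := f xm - (f xi + F1 * (xm - xi) + F2 * (xm - xi) ^ 2 / 2
    + F3 * (xm - xi) ^ 3 / 6) with hRm
  set Rp := f xp - (f xi + F1 * (xp - xi) + F2 * (xp - xi) ^ 2 / 2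
    + F3 * (xp - xi) ^ 3 / 6) with hRp
  have hRmB : |Rm| ≤ M4 * A ^ 4 / 24 := by
    have h := taylor4' f hf h1 (fun x hx => h4 x ⟨hx.1, le_trans hx.2 h2.le⟩)
    rw [hRm, hF1, hF2, hF3, hAdef]
    exact h
  have hRpB : |Rp| ≤ M4 * B ^ 4 / 24 := by
    have h := taylor4 f hf h2 (fun x hx => h4 x ⟨le_trans h1.le hx.1, hx.2⟩)
    rw [hRp, hF1, hF2, hF3, hBdef]
    exact h
  have hF3B : |F3| ≤ M3 := by rw [hF3]; exact h3 xi ⟨h1.le, h2.le⟩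
  have hxm : xm - xi = -A := by rw [hAdef]; ring
  have hxp : xp - xi = B := rfl
  have hfxm : f xm = f xi + F1 * (-A) + F2 * A ^ 2 / 2 + F3 * (-A) ^ 3 / 6 + Rm := by
    rw [hRm, hxm]; ring
  have hfxp : f xp = f xi + F1 * B + F2 * B ^ 2 / 2 + F3 * B ^ 3 / 6 + Rp := by
    rw [hRp, hxp]; ring
  have key : (2 / (A * (A + B))) * f xm + (-2 / (A * B)) * f xi
      + (2 / (B * (A + B))) * f xp - deriv (deriv f) xi
      = (2 / (A * (A + B))) * Rm + (2 / (B * (A + B))) * Rp + (B - A) / 3 * F3 := by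
    rw [hdd, hfxm, hfxp]
    field_simp
    ring
  rw [key]
  have hdivA : A / (A + B) ≤ 1 := by rw [div_le_one hSpos]; linarith
  have hdivB : B / (A + B) ≤ 1 := by rw [div_le_one hSpos]; linarith
  have t1 : |(2 / (A * (A + B))) * Rm| ≤ 1 / 12 * A ^ 2 * M4 := by
    rw [abs_mul, abs_of_pos (by positivity : (0:ℝ) < 2 / (A * (A + B)))]
    calc 2 / (A * (A + B)) * |Rm| ≤ 2 / (A * (A + B)) * (M4 * A ^ 4 / 24) := by gcongr
      _ = 1 / 12 * A ^ 2 * M4 * (A / (A + B)) := by field_simp; ring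
      _ ≤ 1 / 12 * A ^ 2 * M4 * 1 := mul_le_mul_of_nonneg_left hdivA (by positivity)
      _ = 1 / 12 * A ^ 2 * M4 := by ring
  have t2 : |(2 / (B * (A + B))) * Rp| ≤ 1 / 12 * B ^ 2 * M4 := by
    rw [abs_mul, abs_of_pos (by positivity : (0:ℝ) < 2 / (B * (A + B)))]
    calc 2 / (B * (A + B)) * |Rp| ≤ 2 / (B * (A + B)) * (M4 * B ^ 4 / 24) := by gcongr
      _ = 1 / 12 * B ^ 2 * M4 * (B / (A + B)) := by field_simp; ring
      _ ≤ 1 / 12 * B ^ 2 * M4 * 1 := mul_le_mul_of_nonneg_left hdivB (by positivity)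
      _ = 1 / 12 * B ^ 2 * M4 := by ring
  have t3 : |(B - A) / 3 * F3| ≤ 1 / 3 * |B - A| * M3 := by
    rw [abs_mul, abs_div]
    have h3' : |(3:ℝ)| = 3 := by norm_num
    rw [h3']
    calc |B - A| / 3 * |F3| ≤ |B - A| / 3 * M3 := by gcongr
      _ = 1 / 3 * |B - A| * M3 := by ring
  calc |(2 / (A * (A + B))) * Rm + (2 / (B * (A + B))) * Rp + (B - A) / 3 * F3|
      ≤ |(2 / (A * (A + B))) * Rm + (2 / (B * (A + B))) * Rp| + |(B - A) / 3 * F3| :=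
        abs_add_le _ _
    _ ≤ |(2 / (A * (A + B))) * Rm| + |(2 / (B * (A + B))) * Rp| + |(B - A) / 3 * F3| := by
        gcongr
        exact abs_add_le _ _
    _ ≤ 1 / 12 * A ^ 2 * M4 + 1 / 12 * B ^ 2 * M4 + 1 / 3 * |B - A| * M3 := by
        gcongr
    _ = 1 / 3 * |B - A| * M3 + 1 / 12 * (A ^ 2 + B ^ 2) * M4 := by ring
end

section
/- Suppose the finite difference matrices satisfy D_x e_x = 0, D_{xx} e_x = 0, D_v e_v = 0, D_{vv} e_v = 0, where e_x ∈ ℝ^{m₁}, e_v ∈ ℝ^{m₂} are the all-ones vectors. Let the matrix-valued function P̄ : [0,∞) → M_{m₁×m₂}(ℝ) satisfy the forward system P̄'(τ) = ½ D_{xx}ᵀ L²(τ) P̄(τ) ψ²(Λ) + ρξ D_xᵀ L(τ) P̄(τ) ψ(Λ)Λ^α D_v + ½ξ² P̄(τ) Λ^{2α} D_{vv} + (r_d−r_f) D_xᵀ P̄(τ) − ½ D_xᵀ L²(τ) P̄(τ) ψ²(Λ) + P̄(τ) κ(ηI_v − Λ) D_v. Then e_xᵀ P̄'(τ) e_v =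 0 for all τ, and consequently e_xᵀ P̄(τ) e_v = e_xᵀ P̄(0) e_v for all τ ≥ 0 (conservation of total probability mass). -/
open Matrix

/-- conservation of total probability mass for the adjoint forward
SLV semidiscretization, given zero row sums of the finite difference matrices. -/
theorem stmt8 {m₁ m₂ : ℕ}
    (Dx Dxx : Matrix (Fin m₁) (Fin m₁) ℝ) (Dv Dvv : Matrix (Fin m₂) (Fin m₂) ℝ)
    (ex : Fin m₁ → ℝ) (ev : Fin m₂ → ℝ)
    (hex : ex = fun _ => 1) (hev : ev = fun _ => 1)
    (hDx : Dx *ᵥ ex = 0) (hDxx : Dxx *ᵥ ex = 0)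
    (hDv : Dv *ᵥ ev = 0) (hDvv : Dvv *ᵥ ev = 0)
    (ρ ξ κ η rd rf : ℝ)
    (L : ℝ → Matrix (Fin m₁) (Fin m₁) ℝ)
    (Λ Ψ Ψ2 Λα Λ2α : Matrix (Fin m₂) (Fin m₂) ℝ)
    (P : ℝ → Matrix (Fin m₁) (Fin m₂) ℝ)
    (P' : ℝ → Matrix (Fin m₁) (Fin m₂) ℝ)
    (hderiv : ∀ τ, ∀ i j, HasDerivAt (fun τ => P τ i j) (P' τ i j) τ)
    (hODE : ∀ τ, P' τ =
        (1 / 2 : ℝ) • (Dxxᵀ * (L τ * L τ) * P τ * Ψ2)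
      + (ρ * ξ) • (Dxᵀ * L τ * P τ * (Ψ * Λα * Dv))
      + (ξ ^ 2 / 2) • (P τ * Λ2α * Dvv)
      + (rd - rf) • (Dxᵀ * P τ)
      - (1 / 2 : ℝ) • (Dxᵀ * (L τ * L τ) * P τ * Ψ2)
      + κ • (P τ * (η • (1 : Matrix (Fin m₂) (Fin m₂) ℝ) - Λ) * Dv)) :
    (∀ τ, ex ⬝ᵥ (P' τ *ᵥ ev) = 0) ∧
    (∀ τ, 0 ≤ τ → ex ⬝ᵥ (P τ *ᵥ ev) = ex ⬝ᵥ (P 0 *ᵥ ev)) := by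
  have hexDx : ex ᵥ* Dxᵀ = 0 := by rw [vecMul_transpose, hDx]
  have hexDxx : ex ᵥ* Dxxᵀ = 0 := by rw [vecMul_transpose, hDxx]
  have key : ∀ τ, ex ⬝ᵥ (P' τ *ᵥ ev) = 0 := by
    intro τ
    rw [hODE τ]
    simp only [add_mulVec, sub_mulVec, smul_mulVec, dotProduct_add,
      dotProduct_sub, dotProduct_smul]
    have h1 : ex ⬝ᵥ ((Dxxᵀ * (L τ * L τ) * P τ * Ψ2) *ᵥ ev) = 0 := by
      rw [dotProduct_mulVec, Matrix.mul_assoc, Matrix.mul_assoc,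
        ← Matrix.vecMul_vecMul, hexDxx, Matrix.zero_vecMul, zero_dotProduct]
    have h2 : ex ⬝ᵥ ((Dxᵀ * L τ * P τ * (Ψ * Λα * Dv)) *ᵥ ev) = 0 := by
      have e : (Dxᵀ * L τ * P τ * (Ψ * Λα * Dv)) *ᵥ ev
          = (Dxᵀ * L τ * P τ * (Ψ * Λα)) *ᵥ (Dv *ᵥ ev) := by
        rw [Matrix.mulVec_mulVec]; congr 1; simp only [Matrix.mul_assoc]
      rw [e, hDv, Matrix.mulVec_zero, dotProduct_zero]
    have h3 : ex ⬝ᵥ ((P τ * Λ2α * Dvv) *ᵥ ev) = 0 := by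
      have e : (P τ * Λ2α * Dvv) *ᵥ ev = (P τ * Λ2α) *ᵥ (Dvv *ᵥ ev) := by
        rw [Matrix.mulVec_mulVec]
      rw [e, hDvv, Matrix.mulVec_zero, dotProduct_zero]
    have h4 : ex ⬝ᵥ ((Dxᵀ * P τ) *ᵥ ev) = 0 := by
      rw [dotProduct_mulVec, ← Matrix.vecMul_vecMul, hexDx, Matrix.zero_vecMul,
        zero_dotProduct]
    have h5 : ex ⬝ᵥ ((Dxᵀ * (L τ * L τ) * P τ * Ψ2) *ᵥ ev) = 0 := by
      rw [dotProduct_mulVec, Matrix.mul_assoc, Matrix.mul_assoc,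
        ← Matrix.vecMul_vecMul, hexDx, Matrix.zero_vecMul, zero_dotProduct]
    have h6 : ex ⬝ᵥ ((P τ * (η • (1 : Matrix (Fin m₂) (Fin m₂) ℝ) - Λ) * Dv) *ᵥ ev) = 0 := by
      have e : (P τ * (η • (1 : Matrix (Fin m₂) (Fin m₂) ℝ) - Λ) * Dv) *ᵥ ev
          = (P τ * (η • (1 : Matrix (Fin m₂) (Fin m₂) ℝ) - Λ)) *ᵥ (Dv *ᵥ ev) := by
        rw [Matrix.mulVec_mulVec]
      rw [e, hDv, Matrix.mulVec_zero, dotProduct_zero]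
    rw [h1, h2, h3, h4, h5, h6]
    simp
  refine ⟨key, ?_⟩
  have hf : ∀ τ, HasDerivAt (fun τ => ex ⬝ᵥ (P τ *ᵥ ev)) (ex ⬝ᵥ (P' τ *ᵥ ev)) τ := by
    intro τ
    simp only [dotProduct, mulVec]
    apply HasDerivAt.fun_sum
    intro i _
    apply HasDerivAt.const_mul
    apply HasDerivAt.fun_sum
    intro j _
    exact (hderiv τ i j).mul_const _
  intro τ _
  have hdiff : Differentiable ℝ (fun τ => ex ⬝ᵥ (P τ *ᵥ ev)) :=
    fun τ => (hf τ).differentiableAt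
  have hd0 : ∀ τ, deriv (fun τ => ex ⬝ᵥ (P τ *ᵥ ev)) τ = 0 := by
    intro τ; rw [(hf τ).deriv]; exact key τ
  exact is_const_of_deriv_eq_zero hdiff hd0 τ 0
end

section
/- Under the same assumptions D_x e_x = 0, D_{xx} e_x = 0, D_v e_v = 0, D_{vv} e_v = 0, the marginal vector q(τ) := P̄(τ) e_v of the forward SLV system satisfies the one-dimensional ODE q'(τ) = ½ D_{xx}ᵀ L²(τ) W(τ) + (r_d − r_f) D_xᵀ q(τ) − ½ D_xᵀ L²(τ) W(τ), where W(τ) := P̄(τ) ψ²(Λ) e_v. -/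
open Matrix

/-- the marginal vector `q(τ) = P̄(τ) e_v` of the forward SLV system
satisfies the one-dimensional ODE
`q' = ½ Dxxᵀ L² W + (r_d - r_f) Dxᵀ q - ½ Dxᵀ L² W` with `W = P̄ ψ²(Λ) e_v`. -/
theorem stmt9 {m₁ m₂ : ℕ}
    (Dx Dxx : Matrix (Fin m₁) (Fin m₁) ℝ) (Dv Dvv : Matrix (Fin m₂) (Fin m₂) ℝ)
    (ex : Fin m₁ → ℝ) (ev : Fin m₂ → ℝ)
    (hex : ex = fun _ => 1) (hev : ev = fun _ => 1)
    (hDx : Dx *ᵥ ex = 0) (hDxx : Dxx *ᵥ ex = 0)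
    (hDv : Dv *ᵥ ev = 0) (hDvv : Dvv *ᵥ ev = 0)
    (ρ ξ κ η rd rf : ℝ)
    (L : ℝ → Matrix (Fin m₁) (Fin m₁) ℝ)
    (Λ Ψ Ψ2 Λα Λ2α : Matrix (Fin m₂) (Fin m₂) ℝ)
    (P : ℝ → Matrix (Fin m₁) (Fin m₂) ℝ)
    (P' : ℝ → Matrix (Fin m₁) (Fin m₂) ℝ)
    (hderiv : ∀ τ, ∀ i j, HasDerivAt (fun τ => P τ i j) (P' τ i j) τ)
    (hODE : ∀ τ, P' τ =
        (1 / 2 : ℝ) • (Dxxᵀ * (L τ * L τ) * P τ * Ψ2)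
      + (ρ * ξ) • (Dxᵀ * L τ * P τ * (Ψ * Λα * Dv))
      + (ξ ^ 2 / 2) • (P τ * Λ2α * Dvv)
      + (rd - rf) • (Dxᵀ * P τ)
      - (1 / 2 : ℝ) • (Dxᵀ * (L τ * L τ) * P τ * Ψ2)
      + κ • (P τ * (η • (1 : Matrix (Fin m₂) (Fin m₂) ℝ) - Λ) * Dv)) :
    ∀ τ, HasDerivAt (fun τ => P τ *ᵥ ev)
      ((1 / 2 : ℝ) • ((Dxxᵀ * (L τ * L τ)) *ᵥ ((P τ * Ψ2) *ᵥ ev))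
        + (rd - rf) • (Dxᵀ *ᵥ (P τ *ᵥ ev))
        - (1 / 2 : ℝ) • ((Dxᵀ * (L τ * L τ)) *ᵥ ((P τ * Ψ2) *ᵥ ev))) τ := by
  intro τ
  have key : P' τ *ᵥ ev =
      (1 / 2 : ℝ) • ((Dxxᵀ * (L τ * L τ)) *ᵥ ((P τ * Ψ2) *ᵥ ev))
        + (rd - rf) • (Dxᵀ *ᵥ (P τ *ᵥ ev))
        - (1 / 2 : ℝ) • ((Dxᵀ * (L τ * L τ)) *ᵥ ((P τ * Ψ2) *ᵥ ev)) := by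
    rw [hODE τ]
    simp only [add_mulVec, sub_mulVec, smul_mulVec, ← Matrix.mulVec_mulVec,
      hDv, hDvv, mulVec_zero, smul_zero, add_zero, zero_add]
  have hd : HasDerivAt (fun τ => P τ *ᵥ ev) (P' τ *ᵥ ev) τ := by
    rw [hasDerivAt_pi]
    intro i
    simpa [mulVec, dotProduct] using
      HasDerivAt.fun_sum (fun j _ =>
        ((hderiv τ i j).mul_const (ev j)) : ∀ j ∈ Finset.univ,
          HasDerivAt (fun τ => P τ i j * ev j) (P' τ i j * ev j) τ)
  exact key ▸ hd
end

section
/- Suppose P̄ satisfies the adjoint forward SLV semidiscretization, P̄_{LV} satisfies the adjoint forward LV semidiscretization P̄_{LV}'(τ) = ½D_{xx}ᵀ L_{LV}²(τ) P̄_{LV}(τ) + (r_d−r_f)D_xᵀ P̄_{LV}(τ) − ½D_xᵀ L_{LV}²(τ) P̄_{LV}(τ), with the same matrices D_x, D_{xx}, initial condition P̄(0) e_v = P̄_{LV}(0), and row-sum conditions D_x e_x = D_{xx} e_x = D_v e_v = D_{vv} e_v = 0. If the diagonal matrix L(τ) satisfies the matching condition L²(τ) P̄(τ) ψ²(Λ)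 e_v = L_{LV}²(τ) P̄(τ) e_v for all τ, then P̄(τ) e_v = P̄_{LV}(τ) for all τ ≥ 0 (assuming the linear LV ODE has a unique solution, e.g. continuity of coefficients). -/
open Matrix

/-- main calibration theorem. If the leverage matrix satisfies the
matching condition, then the marginals of the semidiscrete SLV density coincide
with the semidiscrete LV density for all times (assuming uniqueness of solutions
of the linear LV ODE). -/
theorem stmt10 {m₁ m₂ : ℕ}
    (Dx Dxx : Matrix (Fin m₁) (Fin m₁) ℝ) (Dv Dvv : Matrix (Fin m₂) (Fin m₂) ℝ)
    (ex : Fin m₁ → ℝ) (ev : Fin m₂ → ℝ)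
    (hex : ex = fun _ => 1) (hev : ev = fun _ => 1)
    (hDx : Dx *ᵥ ex = 0) (hDxx : Dxx *ᵥ ex = 0)
    (hDv : Dv *ᵥ ev = 0) (hDvv : Dvv *ᵥ ev = 0)
    (ρ ξ κ η rd rf : ℝ)
    (L LLV : ℝ → Matrix (Fin m₁) (Fin m₁) ℝ)
    (Λ Ψ Ψ2 Λα Λ2α : Matrix (Fin m₂) (Fin m₂) ℝ)
    -- the adjoint forward SLV semidiscretization
    (P : ℝ → Matrix (Fin m₁) (Fin m₂) ℝ)
    (P' : ℝ → Matrix (Fin m₁) (Fin m₂) ℝ)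
    (hderiv : ∀ τ, ∀ i j, HasDerivAt (fun τ => P τ i j) (P' τ i j) τ)
    (hODE : ∀ τ, P' τ =
        (1 / 2 : ℝ) • (Dxxᵀ * (L τ * L τ) * P τ * Ψ2)
      + (ρ * ξ) • (Dxᵀ * L τ * P τ * (Ψ * Λα * Dv))
      + (ξ ^ 2 / 2) • (P τ * Λ2α * Dvv)
      + (rd - rf) • (Dxᵀ * P τ)
      - (1 / 2 : ℝ) • (Dxᵀ * (L τ * L τ) * P τ * Ψ2)
      + κ • (P τ * (η • (1 : Matrix (Fin m₂) (Fin m₂) ℝ) - Λ) * Dv))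
    -- the adjoint forward LV semidiscretization
    (PLV : ℝ → (Fin m₁ → ℝ))
    (hPLV : ∀ τ, HasDerivAt PLV
        ((1 / 2 : ℝ) • ((Dxxᵀ * (LLV τ * LLV τ)) *ᵥ PLV τ)
          + (rd - rf) • (Dxᵀ *ᵥ PLV τ)
          - (1 / 2 : ℝ) • ((Dxᵀ * (LLV τ * LLV τ)) *ᵥ PLV τ)) τ)
    -- same initial condition for the marginals
    (hinit : P 0 *ᵥ ev = PLV 0)
    -- the matching condition for the leverage matrix
    (hmatch : ∀ τ, (L τ * L τ) *ᵥ ((P τ * Ψ2) *ᵥ ev) = (LLV τ * LLV τ) *ᵥ (P τ *ᵥ ev))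
    -- uniqueness of solutions of the linear LV ODE
    (huniq : ∀ Q₁ Q₂ : ℝ → (Fin m₁ → ℝ),
      (∀ τ, HasDerivAt Q₁
          ((1 / 2 : ℝ) • ((Dxxᵀ * (LLV τ * LLV τ)) *ᵥ Q₁ τ)
            + (rd - rf) • (Dxᵀ *ᵥ Q₁ τ)
            - (1 / 2 : ℝ) • ((Dxᵀ * (LLV τ * LLV τ)) *ᵥ Q₁ τ)) τ) →
      (∀ τ, HasDerivAt Q₂
          ((1 / 2 : ℝ) • ((Dxxᵀ * (LLV τ * LLV τ)) *ᵥ Q₂ τ)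
            + (rd - rf) • (Dxᵀ *ᵥ Q₂ τ)
            - (1 / 2 : ℝ) • ((Dxᵀ * (LLV τ * LLV τ)) *ᵥ Q₂ τ)) τ) →
      Q₁ 0 = Q₂ 0 → Q₁ = Q₂) :
    ∀ τ, 0 ≤ τ → P τ *ᵥ ev = PLV τ := by
  have hd : ∀ σ, HasDerivAt (fun t => P t *ᵥ ev)
      ((1 / 2 : ℝ) • ((Dxxᵀ * (LLV σ * LLV σ)) *ᵥ ((fun t => P t *ᵥ ev) σ))
        + (rd - rf) • (Dxᵀ *ᵥ ((fun t => P t *ᵥ ev) σ))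
        - (1 / 2 : ℝ) • ((Dxᵀ * (LLV σ * LLV σ)) *ᵥ ((fun t => P t *ᵥ ev) σ))) σ := by
    intro σ
    have h1 : HasDerivAt (fun t => P t *ᵥ ev) (P' σ *ᵥ ev) σ := by
      rw [hasDerivAt_pi]
      intro i
      simpa [Matrix.mulVec, dotProduct] using
        HasDerivAt.fun_sum (fun j _ => (hderiv σ i j).mul_const (ev j))
    convert h1 using 1
    rw [hODE]
    have e1 : (Dxxᵀ * (L σ * L σ) * P σ * Ψ2) *ᵥ ev
        = (Dxxᵀ * (LLV σ * LLV σ)) *ᵥ (P σ *ᵥ ev) := by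
      rw [show Dxxᵀ * (L σ * L σ) * P σ * Ψ2 = Dxxᵀ * ((L σ * L σ) * (P σ * Ψ2)) by
        simp [Matrix.mul_assoc]]
      rw [← Matrix.mulVec_mulVec, ← Matrix.mulVec_mulVec, hmatch σ,
        Matrix.mulVec_mulVec, Matrix.mulVec_mulVec, Matrix.mul_assoc]
    have e2 : (Dxᵀ * (L σ * L σ) * P σ * Ψ2) *ᵥ ev
        = (Dxᵀ * (LLV σ * LLV σ)) *ᵥ (P σ *ᵥ ev) := by
      rw [show Dxᵀ * (L σ * L σ) * P σ * Ψ2 = Dxᵀ * ((L σ * L σ) * (P σ * Ψ2)) by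
        simp [Matrix.mul_assoc]]
      rw [← Matrix.mulVec_mulVec, ← Matrix.mulVec_mulVec, hmatch σ,
        Matrix.mulVec_mulVec, Matrix.mulVec_mulVec, Matrix.mul_assoc]
    have e3 : (Dxᵀ * L σ * P σ * (Ψ * Λα * Dv)) *ᵥ ev = 0 := by
      have h0 : (Ψ * Λα * Dv) *ᵥ ev = 0 := by
        rw [← Matrix.mulVec_mulVec, hDv]; simp
      rw [← Matrix.mulVec_mulVec, h0]; simp
    have e4 : (P σ * Λ2α * Dvv) *ᵥ ev = 0 := by
      rw [← Matrix.mulVec_mulVec, hDvv]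
      simp
    have e5 : (P σ * (η • (1 : Matrix (Fin m₂) (Fin m₂) ℝ) - Λ) * Dv) *ᵥ ev = 0 := by
      rw [← Matrix.mulVec_mulVec, hDv]
      simp
    simp only [Matrix.add_mulVec, Matrix.sub_mulVec, Matrix.smul_mulVec,
      e1, e2, e3, e4, e5, smul_zero, add_zero, Matrix.mulVec_mulVec]
    try abel
  intro τ _
  exact congrFun (huniq (fun t => P t *ᵥ ev) PLV hd hPLV hinit) τ
end

section
/- Under the hypotheses of the previous statement (exact semidiscrete calibration P̄(τ)e_v = P̄_{LV}(τ) for all τ), if U solves the backward SLV system U'(t) = A^{(B)}(t)U(t) with U(0) = u₀ ⊗-replicated so that U_{(i,j)}(0) = U_{LV,i}(0) for all j, and U_{LV} solves the backward LV system U_{LV}'(t) = A^{(B)}_{LV}(t)U_{LV}(t), then the spot values coincide: U_{LV,i₀}(T) = P̄_{LV}(T)ᵀ U_{LV}(0) = P̄(T)ᵀ U(0) = U_{k₀}(T), where k₀ is the index corresponding to (i₀, j₀). -/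
open Matrix

lemma dual_const {ι : Type*} [Fintype ι] (T : ℝ)
    (A : ℝ → Matrix ι ι ℝ) (u p : ℝ → ι → ℝ)
    (hu : ∀ t, HasDerivAt u (A t *ᵥ u t) t)
    (hp : ∀ τ, HasDerivAt p ((A (T - τ))ᵀ *ᵥ p τ) τ) :
    p T ⬝ᵥ u 0 = p 0 ⬝ᵥ u T := by
  have key : ∀ τ : ℝ, HasDerivAt (fun τ => p τ ⬝ᵥ u (T - τ)) 0 τ := by
    intro τ
    have hTu : HasDerivAt (fun τ => u (T - τ)) ((-1 : ℝ) • (A (T - τ) *ᵥ u (T - τ))) τ :=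
      (hu (T - τ)).scomp τ ((hasDerivAt_id τ).const_sub T)
    have hsum : HasDerivAt (fun τ => p τ ⬝ᵥ u (T - τ))
        (∑ k, (((A (T - τ))ᵀ *ᵥ p τ) k * u (T - τ) k +
          p τ k * ((-1 : ℝ) • (A (T - τ) *ᵥ u (T - τ))) k)) τ := by
      apply HasDerivAt.fun_sum
      intro k _
      exact ((hasDerivAt_pi.mp (hp τ)) k).mul ((hasDerivAt_pi.mp hTu) k)
    convert hsum using 1
    have h1 : ((A (T - τ))ᵀ *ᵥ p τ) ⬝ᵥ u (T - τ) = p τ ⬝ᵥ (A (T - τ) *ᵥ u (T - τ)) := by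
      rw [Matrix.mulVec_transpose, ← Matrix.dotProduct_mulVec]
    have := h1
    simp only [dotProduct] at this ⊢
    rw [Finset.sum_add_distrib]
    simp only [Pi.smul_apply, smul_eq_mul, neg_one_mul, mul_neg, Finset.sum_neg_distrib]
    rw [this]
    ring
  have hd : Differentiable ℝ (fun τ => p τ ⬝ᵥ u (T - τ)) := fun τ => (key τ).differentiableAt
  have hz : ∀ τ, deriv (fun τ => p τ ⬝ᵥ u (T - τ)) τ = 0 := fun τ => (key τ).deriv
  have := is_const_of_deriv_eq_zero hd hz T 0
  simpa using this

/-- under exact semidiscrete calibration, the approximated fair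
values of non-path-dependent European options under the semidiscrete LV and SLV
models coincide at the spot. -/
theorem stmt11 {m₁ m₂ : ℕ} (T : ℝ) (hT : 0 ≤ T)
    (A : ℝ → Matrix (Fin m₁ × Fin m₂) (Fin m₁ × Fin m₂) ℝ)
    (ALV : ℝ → Matrix (Fin m₁) (Fin m₁) ℝ)
    (U : ℝ → (Fin m₁ × Fin m₂ → ℝ)) (ULV : ℝ → (Fin m₁ → ℝ))
    (P : ℝ → (Fin m₁ × Fin m₂ → ℝ)) (PLV : ℝ → (Fin m₁ → ℝ))
    (i₀ : Fin m₁) (j₀ : Fin m₂)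
    -- backward systems
    (hU : ∀ t, HasDerivAt U (A t *ᵥ U t) t)
    (hULV : ∀ t, HasDerivAt ULV (ALV t *ᵥ ULV t) t)
    -- adjoint forward systems
    (hP : ∀ τ, HasDerivAt P ((A (T - τ))ᵀ *ᵥ P τ) τ)
    (hPLV : ∀ τ, HasDerivAt PLV ((ALV (T - τ))ᵀ *ᵥ PLV τ) τ)
    -- initial conditions for the adjoint forward systems
    (hP0 : P 0 = Pi.single (i₀, j₀) 1)
    (hPLV0 : PLV 0 = Pi.single i₀ 1)
    -- the payoff depends only on the exchange rate
    (hpayoff : ∀ i j, U 0 (i, j) = ULV 0 i)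
    -- exact semidiscrete calibration of the marginals
    (hcal : ∀ τ, (fun i => ∑ j, P τ (i, j)) = PLV τ) :
    ULV T i₀ = PLV T ⬝ᵥ ULV 0 ∧
    PLV T ⬝ᵥ ULV 0 = P T ⬝ᵥ U 0 ∧
    P T ⬝ᵥ U 0 = U T (i₀, j₀) := by
  have hLV : PLV T ⬝ᵥ ULV 0 = PLV 0 ⬝ᵥ ULV T := dual_const T ALV ULV PLV hULV hPLV
  have hSLV : P T ⬝ᵥ U 0 = P 0 ⬝ᵥ U T := dual_const T A U P hU hP
  have h1 : ULV T i₀ = PLV T ⬝ᵥ ULV 0 := by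
    rw [hLV, hPLV0]
    simp [dotProduct, Pi.single_apply, ite_mul]
  have h2 : PLV T ⬝ᵥ ULV 0 = P T ⬝ᵥ U 0 := by
    have hc := hcal T
    simp only [dotProduct]
    rw [Fintype.sum_prod_type]
    calc ∑ i, PLV T i * ULV 0 i
        = ∑ i, (∑ j, P T (i, j)) * ULV 0 i := by
          rw [← hc]
      _ = ∑ i, ∑ j, P T (i, j) * U 0 (i, j) := by
          refine Finset.sum_congr rfl fun i _ => ?_
          rw [Finset.sum_mul]
          exact Finset.sum_congr rfl fun j _ => by rw [hpayoff i j]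
  have h3 : P T ⬝ᵥ U 0 = U T (i₀, j₀) := by
    rw [hSLV, hP0]
    simp [dotProduct, Pi.single_apply, ite_mul]
  exact ⟨h1, h2, h3⟩
end
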